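/- arXiv:0807.0783 — 3 statements merged into one kernel-verified Lean document; each statement's English description precedes it below -/
import Mathlib

section
/- For two pairs (d, χ) and (d', χ'), where d, d' divide q and χ, χ' are Dirichlet characters modulo q/d and q/d' respectively, with (d, χ) ≠ (d', χ'), the sequences χ̃ and χ̃' are orthogonal: ∑_{n=1}^{q} χ̃(n) · conj(χ̃'(n)) = 0. -/
open Complex

private lemma sum_Icc_eq_sum_zmod {M : ℕ} [NeZero M] (g : ZMod M → ℂ) :
    ∑ m ∈ Finset.Icc 1 M, g ((m : ℕ) : ZMod M) = ∑ a : ZMod M, g a := by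
  have hM : 0 < M := Nat.pos_of_ne_zero (NeZero.ne M)
  refine Finset.sum_nbij' (fun m => ((m : ℕ) : ZMod M))
    (fun a => if a = 0 then M else a.val) ?_ ?_ ?_ ?_ ?_
  · intro m _; exact Finset.mem_univ _
  · intro a _
    by_cases h : a = 0
    · subst h
      rw [if_pos rfl, Finset.mem_Icc]
      exact ⟨hM, le_rfl⟩
    · simp only [h, if_false, Finset.mem_Icc]
      exact ⟨Nat.one_le_iff_ne_zero.2 (fun hv => h ((ZMod.val_eq_zero a).mp hv)),
        (ZMod.val_lt a).le⟩
  · intro m hm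
    rw [Finset.mem_Icc] at hm
    by_cases h : ((m : ℕ) : ZMod M) = 0
    · rw [if_pos h]
      rw [ZMod.natCast_eq_zero_iff] at h
      exact (Nat.eq_of_dvd_of_lt_two_mul (by omega) h (by omega)).symm
    · rw [if_neg h]
      have hmM : m < M := by
        rcases lt_or_eq_of_le hm.2 with h' | h'
        · exact h'
        · exact absurd (by simp [h']) h
      exact ZMod.val_cast_of_lt hmM
  · intro a _
    by_cases h : a = 0
    · simp [h]
    · rw [if_neg h, ZMod.natCast_zmod_val]
  · intro m _; rfl

/-- Orthogonality: for distinct pairs `(d, χ)` and `(d', χ')`, with `d, d' ∣ q` and `χ, χ'`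
Dirichlet characters modulo `q/d` and `q/d'`, the sequences `χ̃` and `χ̃'` are orthogonal
for the inner product `⟨a,b⟩ = ∑_{n=1}^q a_n conj(b_n)`. -/
theorem stmt_2 (q d d' : ℕ) (hq : 0 < q) (hd : d ∣ q) (hd' : d' ∣ q)
    (hd0 : 0 < d) (hd'0 : 0 < d')
    (χ : DirichletCharacter ℂ (q / d)) (χ' : DirichletCharacter ℂ (q / d'))
    (hne : ¬ (d = d' ∧ HEq χ χ')) :
    ∑ n ∈ Finset.Icc 1 q,
      (if d ∣ n then χ ((n / d : ℕ) : ZMod (q / d)) else 0) *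
        (starRingEnd ℂ) (if d' ∣ n then χ' ((n / d' : ℕ) : ZMod (q / d')) else 0) = 0 := by
  have hM : 0 < q / d := Nat.div_pos (Nat.le_of_dvd hq hd) hd0
  have hM' : 0 < q / d' := Nat.div_pos (Nat.le_of_dvd hq hd') hd'0
  haveI : NeZero (q / d) := ⟨hM.ne'⟩
  haveI : NeZero (q / d') := ⟨hM'.ne'⟩
  by_cases hdd : d = d'
  · subst hdd
    have hχ : χ ≠ χ' := fun h => hne ⟨rfl, by rw [h]⟩
    calc ∑ n ∈ Finset.Icc 1 q,
        (if d ∣ n then χ ((n / d : ℕ) : ZMod (q / d)) else 0) *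
          (starRingEnd ℂ) (if d ∣ n then χ' ((n / d : ℕ) : ZMod (q / d)) else 0)
        = ∑ n ∈ Finset.Icc 1 q, (if d ∣ n then
            χ ((n / d : ℕ) : ZMod (q / d)) *
              (starRingEnd ℂ) (χ' ((n / d : ℕ) : ZMod (q / d))) else 0) := by
          refine Finset.sum_congr rfl fun n _ => ?_
          by_cases h : d ∣ n <;> simp [h]
      _ = ∑ n ∈ (Finset.Icc 1 q).filter (fun n => d ∣ n),
            χ ((n / d : ℕ) : ZMod (q / d)) *
              (starRingEnd ℂ) (χ' ((n / d : ℕ) : ZMod (q / d))) :=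
          (Finset.sum_filter _ _).symm
      _ = ∑ m ∈ Finset.Icc 1 (q / d),
            χ ((m : ℕ) : ZMod (q / d)) * (starRingEnd ℂ) (χ' ((m : ℕ) : ZMod (q / d))) := by
          refine Finset.sum_nbij' (fun n => n / d) (fun m => d * m) ?_ ?_ ?_ ?_ ?_
          · intro n hn
            simp only [Finset.mem_filter, Finset.mem_Icc] at hn
            simp only [Finset.mem_Icc]
            obtain ⟨⟨h1, h2⟩, hdn⟩ := hn
            exact ⟨Nat.one_le_div_iff hd0 |>.2 (Nat.le_of_dvd (by omega) hdn),
              Nat.div_le_div_right h2⟩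
          · intro m hm
            simp only [Finset.mem_Icc] at hm
            simp only [Finset.mem_filter, Finset.mem_Icc]
            refine ⟨⟨by nlinarith [hm.1], ?_⟩, Dvd.intro m rfl⟩
            calc d * m ≤ d * (q / d) := Nat.mul_le_mul_left d hm.2
              _ = q := Nat.mul_div_cancel' hd
          · intro n hn
            simp only [Finset.mem_filter] at hn
            exact Nat.mul_div_cancel' hn.2
          · intro m _
            exact Nat.mul_div_cancel_left m hd0
          · intro n _; rfl
      _ = ∑ a : ZMod (q / d),
            χ a * (starRingEnd ℂ) (χ' a) :=
          sum_Icc_eq_sum_zmod (fun a => χ a * (starRingEnd ℂ) (χ' a))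
      _ = 0 := by
          have : ∀ a : ZMod (q / d), χ a * (starRingEnd ℂ) (χ' a) = (χ * χ'⁻¹) a := by
            intro a
            rw [MulChar.coeToFun_mul, Pi.mul_apply]
            congr 1
            rw [← MulChar.star_apply' χ' a, RCLike.star_def]
          rw [Finset.sum_congr rfl fun a _ => this a]
          exact MulChar.sum_eq_zero_of_ne_one (by
            rw [Ne, mul_inv_eq_one]
            exact hχ)
  · -- supports are disjoint
    refine Finset.sum_eq_zero fun n _ => ?_
    by_cases h1 : d ∣ n
    · by_cases h2 : d' ∣ n
      · by_cases hu1 : IsUnit ((n / d : ℕ) : ZMod (q / d))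
        · by_cases hu2 : IsUnit ((n / d' : ℕ) : ZMod (q / d'))
          · exfalso
            apply hdd
            rw [ZMod.isUnit_iff_coprime] at hu1 hu2
            have e1 : Nat.gcd n q = d := by
              conv_lhs => rw [← Nat.div_mul_cancel h1, ← Nat.div_mul_cancel hd]
              rw [Nat.gcd_mul_right, hu1, one_mul]
            have e2 : Nat.gcd n q = d' := by
              conv_lhs => rw [← Nat.div_mul_cancel h2, ← Nat.div_mul_cancel hd']
              rw [Nat.gcd_mul_right, hu2, one_mul]
            rw [← e1, ← e2]
          · rw [if_pos h2, χ'.map_nonunit hu2, map_zero, mul_zero]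
        · rw [if_pos h1, χ.map_nonunit hu1, zero_mul]
      · rw [if_neg h2, map_zero, mul_zero]
    · rw [if_neg h1, zero_mul]
end

section
/- Let λ₀, λ₁, λ₂ be nonnegative reals with λ₀ + λ₁ + λ₂ = 1, 1/3 ≤ λ₀ ≤ 1/3 + 1/100, 1/3 ≤ λ₁ ≤ 1/3 + 1/100 (hence 1/3 − 1/50 ≤ λ₂ ≤ 1/3). Then every complex number z with |z − λ₀| ≤ 1/10 can be written as z = λ₁·e^{i u₁} + λ₂·e^{−i u₂} for some real u₁, u₂. -/
open Complex

/-- If `λ₀ + λ₁ + λ₂ = 1` with `1/3 ≤ λ₀, λ₁ ≤ 1/3 + 1/100` (and `λ₂ ≥ 0`), then every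
complex `z` with `|z - λ₀| ≤ 1/10` can be written as `λ₁ e^{iu₁} + λ₂ e^{-iu₂}`. -/
theorem stmt_5 (lam0 lam1 lam2 : ℝ) (h0 : 0 ≤ lam0) (h1 : 0 ≤ lam1) (h2 : 0 ≤ lam2)
    (hsum : lam0 + lam1 + lam2 = 1)
    (h0l : 1/3 ≤ lam0) (h0u : lam0 ≤ 1/3 + 1/100)
    (h1l : 1/3 ≤ lam1) (h1u : lam1 ≤ 1/3 + 1/100)
    (z : ℂ) (hz : ‖z - lam0‖ ≤ 1/10) :
    ∃ u₁ u₂ : ℝ, z = lam1 * Complex.exp (Complex.I * u₁)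
      + lam2 * Complex.exp (-(Complex.I * u₂)) := by
  have hub : ‖z‖ ≤ lam0 + 1/10 := by
    have h := norm_add_le (z - (lam0:ℂ)) lam0
    simp only [sub_add_cancel, Complex.norm_real, Real.norm_eq_abs, _root_.abs_of_nonneg h0] at h
    linarith
  have hlb : lam0 - 1/10 ≤ ‖z‖ := by
    have h := norm_add_le ((lam0:ℂ) - z) z
    simp only [sub_add_cancel, Complex.norm_real, Real.norm_eq_abs, _root_.abs_of_nonneg h0] at h
    have h' : ‖(lam0:ℂ) - z‖ = ‖z - lam0‖ :=
      norm_sub_rev _ _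
    linarith
  set r := ‖z‖ with hrdef
  clear_value r
  have hrl : (7:ℝ)/30 ≤ r := by linarith
  have hru : r ≤ 1/3 + 1/100 + 1/10 := by linarith
  have hbl : 1/3 - 1/50 ≤ lam2 := by linarith
  have hbu : lam2 ≤ 1/3 := by linarith
  have ha0 : (0:ℝ) < lam1 := by linarith
  have hr0 : (0:ℝ) < r := by linarith
  set c := (r^2 + lam1^2 - lam2^2)/(2*lam1*r) with hcdef
  have hden : (0:ℝ) < 2*lam1*r := by positivity
  have hc1 : c ≤ 1 := by
    rw [hcdef, div_le_one hden]
    nlinarith [mul_nonneg (by linarith : (0:ℝ) ≤ lam2 - r + lam1) (by linarith : (0:ℝ) ≤ lam2 + r - lam1)]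
  have hcm1 : -1 ≤ c := by
    rw [hcdef, le_div_iff₀ hden]
    nlinarith [mul_nonneg (by linarith : (0:ℝ) ≤ r + lam1 - lam2) (by linarith : (0:ℝ) ≤ r + lam1 + lam2)]
  have hcmul : c * (2*lam1*r) = r^2 + lam1^2 - lam2^2 := by
    rw [hcdef]; field_simp
  clear_value c
  set α := Real.arccos c with hadef
  have hcos : Real.cos α = c := Real.cos_arccos hcm1 hc1
  clear_value α
  set θ := Complex.arg z with hθdef
  have hzr : (↑r : ℂ) * Complex.exp (↑θ * Complex.I) = z := by
    rw [hrdef, hθdef]; exact Complex.norm_mul_exp_arg_mul_I z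
  clear_value θ
  set w := z - (lam1:ℂ) * Complex.exp (Complex.I * (↑(θ + α))) with hwdef
  clear_value w
  have hwfac : w = Complex.exp (↑θ * Complex.I) * ((↑r : ℂ) - ↑lam1 * Complex.exp (↑α * Complex.I)) := by
    rw [hwdef, ← hzr]
    push_cast
    rw [show Complex.I * ((θ:ℂ) + (α:ℂ)) = ↑θ * Complex.I + ↑α * Complex.I by ring,
      Complex.exp_add]
    ring
  have habs : ‖w‖ = lam2 := by
    rw [hwfac, norm_mul, Complex.norm_exp_ofReal_mul_I, one_mul]
    rw [Complex.norm_def, Complex.normSq_apply]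
    have hre : ((↑r : ℂ) - ↑lam1 * Complex.exp (↑α * Complex.I)).re = r - lam1 * Real.cos α := by
      simp [Complex.exp_ofReal_mul_I_re, Complex.exp_ofReal_mul_I_im]
    have him : ((↑r : ℂ) - ↑lam1 * Complex.exp (↑α * Complex.I)).im = -(lam1 * Real.sin α) := by
      simp [Complex.exp_ofReal_mul_I_re, Complex.exp_ofReal_mul_I_im]
    have hsc := Real.sin_sq_add_cos_sq α
    have harg : (r - lam1 * Real.cos α) * (r - lam1 * Real.cos α)
        + (-(lam1 * Real.sin α)) * (-(lam1 * Real.sin α)) = lam2^2 := by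
      linear_combination lam1^2 * hsc - (2*lam1*r) * hcos - hcmul
    rw [hre, him, harg, pow_two, Real.sqrt_mul_self h2]
  refine ⟨θ + α, -(Complex.arg w), ?_⟩
  have hw2 : (↑lam2 : ℂ) * Complex.exp (-(Complex.I * ↑(-(Complex.arg w)))) = w := by
    push_cast
    rw [show -(Complex.I * -(w.arg:ℂ)) = ↑w.arg * Complex.I by ring, ← habs,
      Complex.norm_mul_exp_arg_mul_I w]
  rw [hw2]
  rw [hwdef]
  ring
end

section
/- Let q be a positive integer and 1 ≤ a ≤ q with gcd(a,q) = 1. Then the sum S_a(σ) = ∑_{p ≡ a (mod q), p prime} 1/p^σ tends to +∞ as σ → 1⁺. Consequently, for any R > 0 there exists η > 0 such that S_a(σ) ≥ R for all 1 < σ ≤ 1 + η. -/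
open ArithmeticFunction.vonMangoldt Filter Topology

private lemma stmt10_div_le_div {a b c : ℝ} (h : a ≤ b) (hc : 0 ≤ c) : a / c ≤ b / c := by
  rw [div_eq_mul_inv, div_eq_mul_inv]
  exact mul_le_mul_of_nonneg_right h (inv_nonneg.mpr hc)

private lemma stmt10_step {x : ℝ} (hx : 2 ≤ x) {α β : ℝ} (hab : α ≤ β) :
    (β - α) * (Real.log x / x ^ β) ≤ 1 / x ^ α - 1 / x ^ β := by
  have hx0 : (0 : ℝ) < x := by linarith
  have ha : (0 : ℝ) < x ^ α := Real.rpow_pos_of_pos hx0 α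
  have hb : (0 : ℝ) < x ^ β := Real.rpow_pos_of_pos hx0 β
  have key2 : (β - α) * Real.log x ≤ x ^ β / x ^ α - 1 := by
    rw [← Real.rpow_sub hx0, Real.rpow_def_of_pos hx0]
    linarith [Real.add_one_le_exp (Real.log x * (β - α)), mul_comm (Real.log x) (β - α)]
  have heq : 1 / x ^ α - 1 / x ^ β = (x ^ β / x ^ α - 1) / x ^ β := by
    field_simp
  rw [heq, mul_div_assoc']
  exact stmt10_div_le_div key2 hb.le

/-- For `gcd(a,q) = 1`, the sum `S_a(σ) = ∑_{p ≡ a (q)} p^{-σ}` over primes tends to `+∞`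
as `σ → 1⁺`; consequently for every `R > 0` there is `η > 0` with `S_a(σ) ≥ R`
for all `1 < σ ≤ 1 + η`. -/
theorem stmt_10 (q a : ℕ) (hq : 0 < q) (ha1 : 1 ≤ a) (haq : a ≤ q)
    (hgcd : Nat.gcd a q = 1) :
    Filter.Tendsto
      (fun σ : ℝ => ∑' p : ℕ, if p.Prime ∧ p % q = a % q then 1 / (p : ℝ) ^ σ else 0)
      (nhdsWithin 1 (Set.Ioi 1)) Filter.atTop ∧
    ∀ R : ℝ, 0 < R → ∃ η : ℝ, 0 < η ∧ ∀ σ : ℝ, 1 < σ → σ ≤ 1 + η →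
      R ≤ ∑' p : ℕ, if p.Prime ∧ p % q = a % q then 1 / (p : ℝ) ^ σ else 0 := by
  haveI : NeZero q := ⟨hq.ne'⟩
  set A : ZMod q := (a : ZMod q) with hA
  have ha : IsUnit A := (ZMod.isUnit_iff_coprime a q).mpr hgcd
  set F : ℝ → ℕ → ℝ :=
    fun σ n => if n.Prime ∧ n % q = a % q then 1 / (n : ℝ) ^ σ else 0 with hF
  -- G is the prime part of the von Mangoldt residue class L-series terms
  set G : ℝ → ℕ → ℝ :=
    fun t n => (if n.Prime then residueClass A n else 0) / (n : ℝ) ^ t with hGdef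
  have hG_eq : ∀ t n, G t n =
      if n.Prime ∧ n % q = a % q then Real.log n / (n : ℝ) ^ t else 0 := by
    intro t n
    show (if n.Prime then residueClass A n else 0) / (n : ℝ) ^ t = _
    by_cases hp : n.Prime
    · by_cases hc : n % q = a % q
      · have hc' : n ∈ {m : ℕ | (m : ZMod q) = A} := (ZMod.natCast_eq_natCast_iff' n a q).mpr hc
        rw [if_pos hp, if_pos (And.intro hp hc),
          show residueClass A n = ArithmeticFunction.vonMangoldt n from Set.indicator_of_mem hc' _,
          ArithmeticFunction.vonMangoldt_apply_prime hp]
      · rw [if_pos hp, if_neg (fun h : n.Prime ∧ n % q = a % q => hc h.2),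
          show residueClass A n = 0 from Set.indicator_of_notMem
            (fun h : n ∈ {m : ℕ | (m : ZMod q) = A} =>
              hc ((ZMod.natCast_eq_natCast_iff' n a q).mp h)) _, zero_div]
    · rw [if_neg hp, if_neg (fun h : n.Prime ∧ n % q = a % q => hp h.1), zero_div]
  have hrpow_nonneg : ∀ (t : ℝ) (n : ℕ), (0:ℝ) ≤ (n : ℝ) ^ t :=
    fun t n => Real.rpow_nonneg n.cast_nonneg t
  have hG_nonneg : ∀ t n, 0 ≤ G t n := by
    intro t n
    refine div_nonneg ?_ (hrpow_nonneg t n)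
    split_ifs
    · exact residueClass_nonneg A n
    · exact le_refl 0
  have hT : ∀ {x : ℝ}, 1 < x → Summable (fun n : ℕ => residueClass A n / (n : ℝ) ^ x) := by
    intro x hx
    exact LSeries.summable_real_of_abscissaOfAbsConv_lt <|
      (abscissaOfAbsConv_residueClass_le_one A).trans_lt <| mod_cast hx
  have hGsum : ∀ {x : ℝ}, 1 < x → Summable (G x) := by
    intro x hx
    refine (hT hx).of_nonneg_of_le (hG_nonneg x) fun n => ?_
    refine stmt10_div_le_div ?_ (hrpow_nonneg x n)
    split_ifs
    · exact le_refl _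
    · exact residueClass_nonneg A n
  have hNPsum : ∀ {x : ℝ}, 1 ≤ x →
      Summable (fun n : ℕ => (if n.Prime then 0 else residueClass A n) / (n : ℝ) ^ x) := by
    intro x hx
    refine (summable_residueClass_non_primes_div A).of_nonneg_of_le (fun n => ?_) (fun n => ?_)
    · refine div_nonneg ?_ (hrpow_nonneg x n)
      split_ifs
      · exact le_refl 0
      · exact residueClass_nonneg A n
    · rcases Nat.eq_zero_or_pos n with rfl | hn
      · simp
      · have h1 : (1:ℝ) ≤ (n:ℝ) := by exact_mod_cast hn
        have hden : (n:ℝ) ≤ (n:ℝ) ^ x := by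
          conv_lhs => rw [← Real.rpow_one (n:ℝ)]
          exact Real.rpow_le_rpow_of_exponent_le h1 hx
        have hnum : (0:ℝ) ≤ (if n.Prime then 0 else residueClass A n) := by
          split_ifs
          · exact le_refl 0
          · exact residueClass_nonneg A n
        exact div_le_div_of_nonneg_left hnum (by linarith) hden |>.trans_eq rfl
  have hFsum : ∀ {σ : ℝ}, 1 < σ → Summable (F σ) := by
    intro σ hσ
    refine (Real.summable_one_div_nat_rpow.mpr hσ).of_nonneg_of_le (fun n => ?_) (fun n => ?_)
    · simp only [hF]
      split_ifs
      · exact div_nonneg zero_le_one (hrpow_nonneg σ n)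
      · exact le_refl 0
    · simp only [hF]
      split_ifs
      · exact le_refl _
      · exact div_nonneg zero_le_one (hrpow_nonneg σ n)
  -- the lower bound for the prime part
  obtain ⟨C, hC⟩ := LSeries_residueClass_lower_bound ha
  set C₂ : ℝ := ∑' n : ℕ, (if n.Prime then 0 else residueClass A n) / (n : ℝ) with hC₂
  set C₃ : ℝ := C + C₂ with hC₃
  have hPlower : ∀ x ∈ Set.Ioc (1:ℝ) 2,
      (q.totient : ℝ)⁻¹ / (x - 1) - C₃ ≤ ∑' n, G x n := by
    intro x hx
    have hx1 : 1 < x := hx.1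
    have hsplit : (fun n : ℕ => residueClass A n / (n : ℝ) ^ x) =
        fun n : ℕ => G x n + (if n.Prime then 0 else residueClass A n) / (n : ℝ) ^ x := by
      funext n
      simp only [hGdef]
      split_ifs <;> simp
    have hTsum := hT hx1
    rw [hsplit] at hTsum
    have hadd : ∑' n : ℕ, residueClass A n / (n : ℝ) ^ x =
        (∑' n, G x n) + ∑' n : ℕ, (if n.Prime then 0 else residueClass A n) / (n : ℝ) ^ x := by
      rw [hsplit]
      exact Summable.tsum_add (hGsum hx1) (hNPsum hx1.le)
    have hNP_le : ∑' n : ℕ, (if n.Prime then 0 else residueClass A n) / (n : ℝ) ^ x ≤ C₂ := by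
      refine Summable.tsum_le_tsum (fun n => ?_) (hNPsum hx1.le) (summable_residueClass_non_primes_div A)
      rcases Nat.eq_zero_or_pos n with rfl | hn
      · simp
      · have h1 : (1:ℝ) ≤ (n:ℝ) := by exact_mod_cast hn
        have hden : (n:ℝ) ≤ (n:ℝ) ^ x := by
          conv_lhs => rw [← Real.rpow_one (n:ℝ)]
          exact Real.rpow_le_rpow_of_exponent_le h1 hx1.le
        have hnum : (0:ℝ) ≤ (if n.Prime then 0 else residueClass A n) := by
          split_ifs
          · exact le_refl 0
          · exact residueClass_nonneg A n
        exact div_le_div_of_nonneg_left hnum (by linarith) hden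
    have := hC hx
    rw [hadd] at this
    simp only [hC₃]
    linarith
  -- the main estimate
  have hmain : ∀ (N : ℕ) (σ : ℝ), 1 < σ → 2 ^ N * (σ - 1) ≤ 1 →
      (N : ℝ) * ((q.totient : ℝ)⁻¹ / 2) - |C₃| ≤ ∑' n, F σ n := by
    intro N σ hσ hN
    set sj : ℕ → ℝ := fun j => 1 + 2 ^ j * (σ - 1) with hsj
    have hs_pos : ∀ j, 1 < sj j := by
      intro j
      have : (0:ℝ) < 2 ^ j * (σ - 1) := mul_pos (by positivity) (by linarith)
      simp only [hsj]; linarith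
    have hs_mono : ∀ j, sj j ≤ sj (j + 1) := by
      intro j
      simp only [hsj, pow_succ]
      nlinarith [pow_pos (by norm_num : (0:ℝ) < 2) j]
    have hs_le2 : ∀ j ≤ N, sj j ≤ 2 := by
      intro j hj
      have h2 : (2:ℝ) ^ j ≤ 2 ^ N := pow_le_pow_right₀ (by norm_num) hj
      have : (2:ℝ) ^ j * (σ - 1) ≤ 2 ^ N * (σ - 1) := by nlinarith
      simp only [hsj]; linarith
    have hdj : ∀ j, sj (j + 1) - sj j = 2 ^ j * (σ - 1) := by
      intro j
      simp only [hsj, pow_succ]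
      ring
    -- termwise estimate
    have hterm : ∀ n : ℕ, (∑ j ∈ Finset.range N, (2 ^ j * (σ - 1)) * G (sj (j + 1)) n)
        ≤ F σ n := by
      intro n
      by_cases hcond : n.Prime ∧ n % q = a % q
      · have hn2 : (2:ℝ) ≤ (n:ℝ) := by exact_mod_cast hcond.1.two_le
        have hstep : ∀ j ∈ Finset.range N,
            (2 ^ j * (σ - 1)) * G (sj (j + 1)) n ≤
              1 / (n:ℝ) ^ (sj j) - 1 / (n:ℝ) ^ (sj (j + 1)) := by
          intro j _
          rw [hG_eq, if_pos hcond, ← hdj j]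
          exact stmt10_step hn2 (hs_mono j)
        calc ∑ j ∈ Finset.range N, (2 ^ j * (σ - 1)) * G (sj (j + 1)) n
            ≤ ∑ j ∈ Finset.range N, (1 / (n:ℝ) ^ (sj j) - 1 / (n:ℝ) ^ (sj (j + 1))) :=
              Finset.sum_le_sum hstep
          _ = 1 / (n:ℝ) ^ (sj 0) - 1 / (n:ℝ) ^ (sj N) := Finset.sum_range_sub' _ N
          _ ≤ 1 / (n:ℝ) ^ (sj 0) := by
              have : (0:ℝ) ≤ 1 / (n:ℝ) ^ (sj N) :=
                div_nonneg zero_le_one (hrpow_nonneg _ n)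
              linarith
          _ = F σ n := by
              have h0 : sj 0 = σ := by simp [hsj]
              rw [h0, hF]
              exact (if_pos hcond).symm
      · have hG0 : ∀ j, G (sj (j + 1)) n = 0 := by
          intro j
          rw [hG_eq, if_neg hcond]
        simp only [hF, if_neg hcond]
        refine le_of_eq ?_
        refine Finset.sum_eq_zero fun j _ => ?_
        rw [hG0 j, mul_zero]
    -- summing up
    have hsum_le : (∑ j ∈ Finset.range N, (2 ^ j * (σ - 1)) * ∑' n, G (sj (j + 1)) n)
        ≤ ∑' n, F σ n := by
      have hswap : (∑ j ∈ Finset.range N, (2 ^ j * (σ - 1)) * ∑' n, G (sj (j + 1)) n)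
          = ∑' n, ∑ j ∈ Finset.range N, (2 ^ j * (σ - 1)) * G (sj (j + 1)) n := by
        calc ∑ j ∈ Finset.range N, (2 ^ j * (σ - 1)) * ∑' n, G (sj (j + 1)) n
            = ∑ j ∈ Finset.range N, ∑' n, (2 ^ j * (σ - 1)) * G (sj (j + 1)) n := by
              refine Finset.sum_congr rfl fun j _ => ?_
              rw [tsum_mul_left]
          _ = ∑' n, ∑ j ∈ Finset.range N, (2 ^ j * (σ - 1)) * G (sj (j + 1)) n :=
              (Summable.tsum_finsetSum fun j _ => (hGsum (hs_pos (j + 1))).mul_left _).symm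
      rw [hswap]
      refine Summable.tsum_le_tsum hterm ?_ (hFsum hσ)
      exact summable_sum fun j _ => (hGsum (hs_pos (j + 1))).mul_left _
    -- lower bound for each summand
    have hjlow : ∀ j ∈ Finset.range N,
        (q.totient : ℝ)⁻¹ / 2 - (2 ^ j * (σ - 1)) * |C₃| ≤
          (2 ^ j * (σ - 1)) * ∑' n, G (sj (j + 1)) n := by
      intro j hj
      have hjN : j + 1 ≤ N := Finset.mem_range.mp hj
      have hd_pos : (0:ℝ) < 2 ^ j * (σ - 1) := mul_pos (by positivity) (by linarith)
      have hmem : sj (j + 1) ∈ Set.Ioc (1:ℝ) 2 := ⟨hs_pos (j + 1), hs_le2 (j + 1) hjN⟩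
      have hlow := hPlower (sj (j + 1)) hmem
      have hd1 : sj (j + 1) - 1 = 2 * (2 ^ j * (σ - 1)) := by
        simp only [hsj, pow_succ]; ring
      rw [hd1] at hlow
      have hmul := mul_le_mul_of_nonneg_left hlow hd_pos.le
      have hdne : (2:ℝ) ^ j * (σ - 1) ≠ 0 := hd_pos.ne'
      have heq : (2 ^ j * (σ - 1)) * ((q.totient : ℝ)⁻¹ / (2 * (2 ^ j * (σ - 1))) - C₃)
          = (q.totient : ℝ)⁻¹ / 2 - (2 ^ j * (σ - 1)) * C₃ := by
        rw [mul_sub, mul_div_assoc', mul_comm 2 ((2:ℝ) ^ j * (σ - 1)),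
          mul_div_mul_left _ _ hdne]
      rw [heq] at hmul
      have h5 : (2 ^ j * (σ - 1)) * C₃ ≤ (2 ^ j * (σ - 1)) * |C₃| :=
        mul_le_mul_of_nonneg_left (le_abs_self C₃) hd_pos.le
      exact (sub_le_sub_left h5 _).trans hmul
    have hdsum : (∑ j ∈ Finset.range N, (2:ℝ) ^ j * (σ - 1)) ≤ 1 := by
      rw [← Finset.sum_mul, geom_sum_eq (by norm_num : (2:ℝ) ≠ 1) N]
      have h2N : ((2:ℝ) ^ N - 1) / (2 - 1) = 2 ^ N - 1 := by norm_num
      rw [h2N]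
      nlinarith [hN, sub_pos.mpr hσ]
    calc (N : ℝ) * ((q.totient : ℝ)⁻¹ / 2) - |C₃|
        ≤ ∑ j ∈ Finset.range N, ((q.totient : ℝ)⁻¹ / 2 - (2 ^ j * (σ - 1)) * |C₃|) := by
          rw [Finset.sum_sub_distrib, Finset.sum_const, Finset.card_range, nsmul_eq_mul]
          have : (∑ j ∈ Finset.range N, (2 ^ j * (σ - 1)) * |C₃|)
              = (∑ j ∈ Finset.range N, (2:ℝ) ^ j * (σ - 1)) * |C₃| := by
            rw [Finset.sum_mul]
          rw [this]
          have habs : (0:ℝ) ≤ |C₃| := abs_nonneg C₃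
          nlinarith [mul_le_mul_of_nonneg_right hdsum habs]
      _ ≤ ∑ j ∈ Finset.range N, (2 ^ j * (σ - 1)) * ∑' n, G (sj (j + 1)) n :=
          Finset.sum_le_sum hjlow
      _ ≤ ∑' n, F σ n := hsum_le
  -- existence of η for each R
  have hφ : (0:ℝ) < (q.totient : ℝ)⁻¹ := by
    have h6 := Nat.totient_pos.mpr hq
    positivity
  have h2 : ∀ R : ℝ, 0 < R → ∃ η : ℝ, 0 < η ∧ ∀ σ : ℝ, 1 < σ → σ ≤ 1 + η →
      R ≤ ∑' p : ℕ, F σ p := by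
    intro R hR
    obtain ⟨N, hNge⟩ := exists_nat_ge ((R + |C₃|) / ((q.totient : ℝ)⁻¹ / 2))
    refine ⟨1 / 2 ^ N, by positivity, fun σ hσ1 hσ2 => ?_⟩
    have hNbound : 2 ^ N * (σ - 1) ≤ 1 := by
      have h2N : (0:ℝ) < 2 ^ N := by positivity
      have : σ - 1 ≤ 1 / 2 ^ N := by linarith
      calc (2:ℝ) ^ N * (σ - 1) ≤ 2 ^ N * (1 / 2 ^ N) :=
            mul_le_mul_of_nonneg_left this h2N.le
        _ = 1 := by field_simp
    have hRN : R ≤ (N : ℝ) * ((q.totient : ℝ)⁻¹ / 2) - |C₃| := by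
      have hhalf : (0:ℝ) < (q.totient : ℝ)⁻¹ / 2 := by positivity
      have := (div_le_iff₀ hhalf).mp hNge
      linarith
    exact hRN.trans (hmain N σ hσ1 hNbound)
  refine ⟨?_, h2⟩
  rw [tendsto_atTop]
  intro b
  obtain ⟨η, hη, hb⟩ := h2 (max b 1) (lt_of_lt_of_le one_pos (le_max_right b 1))
  have hmem : Set.Ioc (1:ℝ) (1 + η) ∈ nhdsWithin (1:ℝ) (Set.Ioi 1) :=
    Ioc_mem_nhdsGT_of_mem ⟨le_refl 1, by linarith⟩
  filter_upwards [hmem] with σ hσ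
  exact le_trans (le_max_left b 1) (hb σ hσ.1 hσ.2)
end
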